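/- There exists an absolute constant c > 0 with the following property. For every positive integer n₀, all reals n₁ > 0 and m₁ > 0 with m₁ ≥ n₁ and m₁ ≥ n₀, and all integers 1 ≤ ℓ₁ ≤ ℓ₂ ≤ n₀ − 1, one has |Σ_{ℓ=ℓ₁}^{ℓ₂} η_ℓ| ≤ c·(1 + √(n₁/(n₀ − ℓ₂))). -/

import Mathlib

open Finset

/-- The unit complex number `ρ_j = √(a/(a + k_j)) + i √(k_j/(a + k_j))`, `k_j = n₀ - j`.
Taking `a = n₁` gives `ρ_j` and taking `a = m₁` gives `ρ̂_j`. -/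
noncomputable def rhoUnit (n₀ : ℕ) (a : ℝ) (j : ℕ) : ℂ :=
  ((Real.sqrt (a / (a + ((n₀ : ℝ) - j))) : ℝ) : ℂ)
    + Complex.I * ((Real.sqrt (((n₀ : ℝ) - j) / (a + ((n₀ : ℝ) - j))) : ℝ) : ℂ)

/-- `η_ℓ = Π_{j=0}^{ℓ} (ρ_j ρ̂_j)²`. -/
noncomputable def etaProd (n₀ : ℕ) (n₁ m₁ : ℝ) (ℓ : ℕ) : ℂ :=
  ∏ j ∈ Finset.range (ℓ + 1), (rhoUnit n₀ n₁ j * rhoUnit n₀ m₁ j) ^ 2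

namespace EtaAux

open Real Complex

/-- The angle `arcsin √(k/(a+k))`. -/
noncomputable def ang (a k : ℝ) : ℝ := Real.arcsin (Real.sqrt (k / (a + k)))

lemma ang_nonneg {a k : ℝ} (ha : 0 < a) (hk : 0 ≤ k) : 0 ≤ ang a k :=
  Real.arcsin_nonneg.2 (Real.sqrt_nonneg _)

lemma ang_pos {a k : ℝ} (ha : 0 < a) (hk : 0 < k) : 0 < ang a k := by
  refine Real.arcsin_pos.2 (Real.sqrt_pos.2 ?_)
  positivity

lemma ang_lt {a k : ℝ} (ha : 0 < a) (hk : 0 ≤ k) : ang a k < π / 2 := by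
  refine Real.arcsin_lt_pi_div_two.2 ?_
  have h1 : k / (a + k) < 1 := by
    rw [div_lt_one (by linarith)]; linarith
  calc Real.sqrt (k / (a + k)) < Real.sqrt 1 :=
        Real.sqrt_lt_sqrt (by positivity) h1
    _ = 1 := Real.sqrt_one

lemma frac_mem {a k : ℝ} (ha : 0 < a) (hk : 0 ≤ k) :
    0 ≤ k / (a + k) ∧ k / (a + k) ≤ 1 := by
  constructor
  · positivity
  · rw [div_le_one (by linarith)]; linarith

lemma sin_ang {a k : ℝ} (ha : 0 < a) (hk : 0 ≤ k) :
    Real.sin (ang a k) = Real.sqrt (k / (a + k)) := by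
  obtain ⟨h0, h1⟩ := frac_mem ha hk
  exact Real.sin_arcsin (by linarith [Real.sqrt_nonneg (k / (a + k))]) (Real.sqrt_le_one.2 h1)

lemma cos_ang {a k : ℝ} (ha : 0 < a) (hk : 0 ≤ k) :
    Real.cos (ang a k) = Real.sqrt (a / (a + k)) := by
  obtain ⟨h0, h1⟩ := frac_mem ha hk
  rw [ang, Real.cos_arcsin, Real.sq_sqrt h0]
  congr 1
  field_simp
  ring

lemma sin_ang_pos {a k : ℝ} (ha : 0 < a) (hk : 0 < k) : 0 < Real.sin (ang a k) := by
  rw [sin_ang ha hk.le]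
  positivity

lemma tan_ang {a k : ℝ} (ha : 0 < a) (hk : 0 < k) :
    Real.tan (π / 2 - ang a k) = Real.sqrt (a / k) := by
  rw [Real.tan_eq_sin_div_cos, Real.sin_pi_div_two_sub, Real.cos_pi_div_two_sub,
    cos_ang ha hk.le, sin_ang ha hk.le, Real.sqrt_div ha.le, Real.sqrt_div hk.le,
    Real.sqrt_div ha.le]
  have h1 : Real.sqrt (a + k) ≠ 0 := by positivity
  have h2 : Real.sqrt k ≠ 0 := by positivity
  field_simp

lemma ang_mono {a k k' : ℝ} (ha : 0 < a) (hk : 0 ≤ k) (hkk : k ≤ k') :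
    ang a k ≤ ang a k' := by
  refine Real.monotone_arcsin (Real.sqrt_le_sqrt ?_)
  rw [div_le_div_iff₀ (by linarith) (by linarith)]
  nlinarith

lemma ang_le_pi_div_four {a k : ℝ} (ha : 0 < a) (hk : 0 ≤ k) (hka : k ≤ a) :
    ang a k ≤ π / 4 := by
  have h1 : k / (a + k) ≤ 1 / 2 := by
    rw [div_le_div_iff₀ (by linarith) (by norm_num)]; linarith
  have h2 : Real.sqrt (1 / 2) = Real.sin (π / 4) := by
    rw [Real.sin_pi_div_four]
    rw [show (1 : ℝ) / 2 = 2 / 2 ^ 2 by norm_num, Real.sqrt_div' 2 (by norm_num)]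
    congr 1
    rw [show ((2:ℝ) ^ 2) = 4 by norm_num]
    rw [Real.sqrt_eq_iff_mul_self_eq (by norm_num) (by norm_num)]
    norm_num
  have h3 : ang a k ≤ Real.arcsin (Real.sin (π / 4)) := by
    refine Real.monotone_arcsin ?_
    rw [← h2]
    exact Real.sqrt_le_sqrt h1
  have hπ := Real.pi_pos
  rwa [Real.arcsin_sin (by linarith) (by linarith)] at h3

lemma tan_mono {x y : ℝ} (hx : -(π/2) < x) (hxy : x ≤ y) (hy : y < π/2) :
    Real.tan x ≤ Real.tan y := by
  rcases eq_or_lt_of_le hxy with rfl | h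
  · exact le_refl _
  · exact (Real.tan_lt_tan_of_lt_of_lt_pi_div_two hx hy h).le

/-- The phase increment `2(α_j + β_j)` halved. -/
noncomputable def psi (n₀ : ℕ) (n₁ m₁ : ℝ) (j : ℕ) : ℝ :=
  ang n₁ ((n₀ : ℝ) - j) + ang m₁ ((n₀ : ℝ) - j)

/-- The accumulated phase. -/
noncomputable def phi (n₀ : ℕ) (n₁ m₁ : ℝ) (ℓ : ℕ) : ℝ :=
  ∑ j ∈ Finset.range (ℓ + 1), 2 * psi n₀ n₁ m₁ j

lemma rho_exp (n₀ : ℕ) {a : ℝ} (ha : 0 < a) {j : ℕ} (hj : 0 ≤ (n₀ : ℝ) - j) :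
    rhoUnit n₀ a j = Complex.exp ((ang a ((n₀ : ℝ) - j) : ℝ) * Complex.I) := by
  rw [Complex.exp_mul_I, ← Complex.ofReal_cos, ← Complex.ofReal_sin,
    cos_ang ha hj, sin_ang ha hj, rhoUnit]
  ring

lemma eta_exp (n₀ : ℕ) {n₁ m₁ : ℝ} (hn : 0 < n₁) (hm : 0 < m₁) (ℓ : ℕ)
    (hk : ∀ j, j ≤ ℓ → 0 ≤ (n₀ : ℝ) - j) :
    etaProd n₀ n₁ m₁ ℓ = Complex.exp ((phi n₀ n₁ m₁ ℓ : ℝ) * Complex.I) := by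
  rw [etaProd, phi, Complex.ofReal_sum, Finset.sum_mul, Complex.exp_sum]
  refine Finset.prod_congr rfl fun j hj => ?_
  have hj' : 0 ≤ (n₀ : ℝ) - j :=
    hk j (by simpa [Nat.lt_succ_iff] using Finset.mem_range.1 hj)
  rw [rho_exp n₀ hn hj', rho_exp n₀ hm hj', ← Complex.exp_add, sq, ← Complex.exp_add]
  congr 1
  rw [psi]
  push_cast
  ring

lemma abel_id (u g : ℕ → ℂ) : ∀ b a : ℕ, a ≤ b →
    ∑ ℓ ∈ Icc a b, (u (ℓ + 1) - u ℓ) * g ℓ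
      = u (b + 1) * g b - u a * g a
        - ∑ ℓ ∈ Icc (a + 1) b, u ℓ * (g ℓ - g (ℓ - 1)) := by
  intro b
  induction b with
  | zero =>
    intro a ha
    interval_cases a
    simp
    ring
  | succ b ih =>
    intro a ha
    rcases Nat.lt_or_ge a (b + 1) with h | h
    · have hab : a ≤ b := by omega
      rw [Finset.sum_Icc_succ_top (by omega : a ≤ b + 1),
        Finset.sum_Icc_succ_top (by omega : a + 1 ≤ b + 1), ih a hab]
      simp only [Nat.add_sub_cancel]
      ring
    · have : a = b + 1 := by omega
      subst this
      rw [Finset.Icc_self, Finset.sum_singleton,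
        show Finset.Icc (b + 1 + 1) (b + 1) = ∅ from Finset.Icc_eq_empty (by omega)]
      simp
      ring

lemma telescope (d : ℕ → ℝ) : ∀ b a : ℕ, a ≤ b →
    ∑ ℓ ∈ Icc (a + 1) b, (d (ℓ - 1) - d ℓ) = d a - d b := by
  intro b
  induction b with
  | zero =>
    intro a ha
    interval_cases a
    simp
  | succ b ih =>
    intro a ha
    rcases Nat.lt_or_ge a (b + 1) with h | h
    · have hab : a ≤ b := by omega
      rw [Finset.sum_Icc_succ_top (by omega : a + 1 ≤ b + 1), ih a hab]
      simp only [Nat.add_sub_cancel]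
      ring
    · have : a = b + 1 := by omega
      subst this
      rw [show Finset.Icc (b + 1 + 1) (b + 1) = ∅ from Finset.Icc_eq_empty (by omega)]
      simp

end EtaAux

namespace EtaAux

open Real Complex

variable {n₀ : ℕ} {n₁ m₁ : ℝ}

lemma psi_pos (hn : 0 < n₁) (hm : 0 < m₁) {j : ℕ} (hj : 1 ≤ (n₀ : ℝ) - j) :
    0 < psi n₀ n₁ m₁ j := by
  have h1 : 0 < ang n₁ ((n₀ : ℝ) - j) := ang_pos hn (by linarith)
  have h2 : 0 ≤ ang m₁ ((n₀ : ℝ) - j) := ang_nonneg hm (by linarith)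
  rw [psi]; linarith

lemma psi_lt (hn : 0 < n₁) (hm : 0 < m₁) (hm₀ : (n₀ : ℝ) ≤ m₁) {j : ℕ}
    (hj : 1 ≤ (n₀ : ℝ) - j) : psi n₀ n₁ m₁ j < 3 * π / 4 := by
  have h1 : ang n₁ ((n₀ : ℝ) - j) < π / 2 := ang_lt hn (by linarith)
  have h2 : ang m₁ ((n₀ : ℝ) - j) ≤ π / 4 := by
    refine ang_le_pi_div_four hm (by linarith) ?_
    have : (0 : ℝ) ≤ (j : ℝ) := Nat.cast_nonneg j
    linarith
  rw [psi]; linarith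

lemma psi_anti (hn : 0 < n₁) (hm : 0 < m₁) {j j' : ℕ} (hjj : j ≤ j')
    (hj' : 0 ≤ (n₀ : ℝ) - j') : psi n₀ n₁ m₁ j' ≤ psi n₀ n₁ m₁ j := by
  have hc : (j : ℝ) ≤ (j' : ℝ) := by exact_mod_cast hjj
  have h1 : ang n₁ ((n₀ : ℝ) - j') ≤ ang n₁ ((n₀ : ℝ) - j) :=
    ang_mono hn hj' (by linarith)
  have h2 : ang m₁ ((n₀ : ℝ) - j') ≤ ang m₁ ((n₀ : ℝ) - j) :=
    ang_mono hm hj' (by linarith)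
  rw [psi, psi]; linarith

lemma neg_one_le_tan_psi (hn : 0 < n₁) (hm : 0 < m₁) (hm₀ : (n₀ : ℝ) ≤ m₁) {j : ℕ}
    (hj : 1 ≤ (n₀ : ℝ) - j) : -1 ≤ Real.tan (π / 2 - psi n₀ n₁ m₁ j) := by
  have hπ := Real.pi_pos
  have h1 := psi_pos hn hm hj
  have h2 := psi_lt hn hm hm₀ hj
  have h3 : Real.tan (-(π / 4)) ≤ Real.tan (π / 2 - psi n₀ n₁ m₁ j) :=
    tan_mono (by linarith) (by linarith) (by linarith)
  rwa [Real.tan_neg, Real.tan_pi_div_four] at h3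

lemma tan_psi_le (hn : 0 < n₁) (hm : 0 < m₁) (hm₀ : (n₀ : ℝ) ≤ m₁) {j : ℕ}
    (hj : 1 ≤ (n₀ : ℝ) - j) :
    Real.tan (π / 2 - psi n₀ n₁ m₁ j) ≤ Real.sqrt (n₁ / ((n₀ : ℝ) - j)) := by
  have hπ := Real.pi_pos
  have h2 := psi_lt hn hm hm₀ hj
  have hα : 0 < ang n₁ ((n₀ : ℝ) - j) := ang_pos hn (by linarith)
  have hβ : 0 ≤ ang m₁ ((n₀ : ℝ) - j) := ang_nonneg hm (by linarith)
  have h3 : Real.tan (π / 2 - psi n₀ n₁ m₁ j)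
      ≤ Real.tan (π / 2 - ang n₁ ((n₀ : ℝ) - j)) := by
    refine tan_mono (by linarith) ?_ (by linarith)
    rw [psi]; linarith
  rwa [tan_ang hn (by linarith)] at h3

lemma exp_ne_one (hn : 0 < n₁) (hm : 0 < m₁) (hm₀ : (n₀ : ℝ) ≤ m₁) {j : ℕ}
    (hj : 1 ≤ (n₀ : ℝ) - j) :
    Complex.exp (((2 * psi n₀ n₁ m₁ j : ℝ) : ℂ) * Complex.I) ≠ 1 := by
  have hπ := Real.pi_pos
  have h1 := psi_pos hn hm hj
  have h2 := psi_lt hn hm hm₀ hj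
  intro h
  rw [Complex.exp_eq_one_iff] at h
  obtain ⟨n, hne⟩ := h
  have h3 : ((2 * psi n₀ n₁ m₁ j : ℝ) : ℂ) = ((n : ℝ) * (2 * π) : ℝ) := by
    have : ((n : ℂ)) * (2 * (π : ℂ) * Complex.I) = ((n : ℝ) * (2 * π) : ℝ) * Complex.I := by
      push_cast; ring
    rw [this] at hne
    exact mul_right_cancel₀ Complex.I_ne_zero hne
  have h4 : 2 * psi n₀ n₁ m₁ j = (n : ℝ) * (2 * π) := by exact_mod_cast h3
  rcases le_or_gt (n : ℝ) 0 with hn0 | hn0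
  · nlinarith
  · have : (1 : ℝ) ≤ (n : ℝ) := by
      have : (0 : ℤ) < n := by exact_mod_cast hn0
      exact_mod_cast this
    nlinarith

lemma g_eq (hn : 0 < n₁) (hm : 0 < m₁) (hm₀ : (n₀ : ℝ) ≤ m₁) {j : ℕ}
    (hj : 1 ≤ (n₀ : ℝ) - j) :
    (Complex.exp (((2 * psi n₀ n₁ m₁ j : ℝ) : ℂ) * Complex.I) - 1)⁻¹
      = ((-(1 / 2) : ℝ) : ℂ)
        + ((-(Real.tan (π / 2 - psi n₀ n₁ m₁ j)) / 2 : ℝ) : ℂ) * Complex.I := by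
  have hπ := Real.pi_pos
  set x : ℝ := psi n₀ n₁ m₁ j with hx
  have h1 : 0 < x := psi_pos hn hm hj
  have h2 : x < 3 * π / 4 := psi_lt hn hm hm₀ hj
  have hsin : 0 < Real.sin x := Real.sin_pos_of_pos_of_lt_pi h1 (by linarith)
  have hpyth := Real.sin_sq_add_cos_sq x
  have hre : (Complex.exp (((2 * x : ℝ) : ℂ) * Complex.I) - 1).re = Real.cos (2 * x) - 1 := by
    rw [Complex.sub_re, Complex.exp_ofReal_mul_I_re, Complex.one_re]
  have him : (Complex.exp (((2 * x : ℝ) : ℂ) * Complex.I) - 1).im = Real.sin (2 * x) := by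
    rw [Complex.sub_im, Complex.exp_ofReal_mul_I_im, Complex.one_im, sub_zero]
  have hns : Complex.normSq (Complex.exp (((2 * x : ℝ) : ℂ) * Complex.I) - 1)
      = 4 * Real.sin x ^ 2 := by
    rw [Complex.normSq_apply, hre, him, Real.cos_two_mul, Real.sin_two_mul]
    nlinarith
  have htan : Real.tan (π / 2 - x) = Real.cos x / Real.sin x := by
    rw [Real.tan_eq_sin_div_cos, Real.sin_pi_div_two_sub, Real.cos_pi_div_two_sub]
  apply Complex.ext
  · rw [Complex.inv_re, hns, hre, Real.cos_two_mul]
    have hrhs : (((-(1 / 2) : ℝ) : ℂ)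
        + ((-(Real.tan (π / 2 - x)) / 2 : ℝ) : ℂ) * Complex.I).re = -(1 / 2) := by
      simp only [Complex.add_re, Complex.ofReal_re, Complex.mul_re, Complex.I_re,
        Complex.I_im, Complex.ofReal_im]
      ring
    rw [hrhs, div_eq_iff (by positivity : (4 : ℝ) * Real.sin x ^ 2 ≠ 0)]
    nlinarith
  · rw [Complex.inv_im, hns, him, Real.sin_two_mul]
    have hrhs : (((-(1 / 2) : ℝ) : ℂ)
        + ((-(Real.tan (π / 2 - x)) / 2 : ℝ) : ℂ) * Complex.I).im
          = -(Real.tan (π / 2 - x)) / 2 := by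
      simp only [Complex.add_im, Complex.ofReal_im, Complex.mul_im, Complex.I_re,
        Complex.I_im, Complex.ofReal_re]
      ring
    rw [hrhs, htan]
    field_simp
    ring

end EtaAux

namespace EtaAux

open Real

lemma key {n₀ : ℕ} {n₁ m₁ : ℝ} (hn₁ : 0 < n₁) (hm₁ : 0 < m₁) (hn₀m : (n₀ : ℝ) ≤ m₁)
    {ℓ₁ b : ℕ} (hab : ℓ₁ ≤ b) (hb : (b : ℝ) + 2 ≤ (n₀ : ℝ)) :
    ‖∑ ℓ ∈ Icc ℓ₁ (b + 1), Complex.exp (((phi n₀ n₁ m₁ ℓ : ℝ) : ℂ) * Complex.I)‖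
      ≤ 4 + 2 * Real.sqrt (n₁ / ((n₀ : ℝ) - ((b : ℝ) + 1))) := by
  have hπ := Real.pi_pos
  set T : ℝ := Real.sqrt (n₁ / ((n₀ : ℝ) - ((b : ℝ) + 1))) with hT
  have hT0 : 0 ≤ T := Real.sqrt_nonneg _
  set u : ℕ → ℂ := fun ℓ => Complex.exp (((phi n₀ n₁ m₁ ℓ : ℝ) : ℂ) * Complex.I) with hu
  set t : ℕ → ℝ := fun ℓ => Real.tan (π / 2 - psi n₀ n₁ m₁ (ℓ + 1)) with ht
  set g : ℕ → ℂ :=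
    fun ℓ => (Complex.exp (((2 * psi n₀ n₁ m₁ (ℓ + 1) : ℝ) : ℂ) * Complex.I) - 1)⁻¹ with hg
  have hk1 : ∀ j : ℕ, j ≤ b + 1 → 1 ≤ (n₀ : ℝ) - j := by
    intro j hj
    have : (j : ℝ) ≤ (b : ℝ) + 1 := by exact_mod_cast hj
    linarith
  have huabs : ∀ ℓ, ‖u ℓ‖ = 1 := fun ℓ => by
    exact Complex.norm_exp_ofReal_mul_I _
  have htlow : ∀ ℓ : ℕ, ℓ + 1 ≤ b + 1 → -1 ≤ t ℓ := fun ℓ h =>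
    neg_one_le_tan_psi hn₁ hm₁ hn₀m (hk1 _ h)
  have hthigh : ∀ ℓ : ℕ, ℓ + 1 ≤ b + 1 → t ℓ ≤ T := by
    intro ℓ h
    have h1 : t ℓ ≤ Real.sqrt (n₁ / ((n₀ : ℝ) - ((ℓ + 1 : ℕ) : ℝ))) :=
      tan_psi_le hn₁ hm₁ hn₀m (hk1 _ h)
    refine h1.trans (Real.sqrt_le_sqrt ?_)
    have h2 : ((ℓ : ℝ) + 1) ≤ (b : ℝ) + 1 := by exact_mod_cast h
    have h3 : (0 : ℝ) < (n₀ : ℝ) - ((b : ℝ) + 1) := by linarith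
    push_cast
    exact div_le_div_of_nonneg_left hn₁.le h3 (by linarith)
  have hgeq : ∀ ℓ : ℕ, ℓ + 1 ≤ b + 1 →
      g ℓ = ((-(1 / 2) : ℝ) : ℂ) + ((-(t ℓ) / 2 : ℝ) : ℂ) * Complex.I := fun ℓ h =>
    g_eq hn₁ hm₁ hn₀m (hk1 _ h)
  have hgabs : ∀ ℓ : ℕ, ℓ + 1 ≤ b + 1 → ‖g ℓ‖ ≤ 1 + T / 2 := by
    intro ℓ h
    rw [hgeq ℓ h]
    have h1 := htlow ℓ h
    have h2 := hthigh ℓ h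
    calc ‖((-(1 / 2) : ℝ) : ℂ) + ((-(t ℓ) / 2 : ℝ) : ℂ) * Complex.I‖
        ≤ ‖((-(1 / 2) : ℝ) : ℂ)‖ + ‖((-(t ℓ) / 2 : ℝ) : ℂ) * Complex.I‖ := norm_add_le _ _
      _ = |(-(1 / 2) : ℝ)| + |(-(t ℓ) / 2 : ℝ)| := by
          rw [norm_mul, Complex.norm_I, mul_one, Complex.norm_real, Complex.norm_real,
            Real.norm_eq_abs, Real.norm_eq_abs]
      _ ≤ 1 / 2 + (1 + T) / 2 := by
          have h3 : |(-(t ℓ) / 2 : ℝ)| ≤ (1 + T) / 2 :=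
            abs_le.mpr ⟨by linarith, by linarith⟩
          have h4 : |(-(1 / 2) : ℝ)| = 1 / 2 := by norm_num
          linarith
      _ ≤ 1 + T / 2 := by linarith
  have hrep : ∀ ℓ ∈ Icc ℓ₁ b, u ℓ = (u (ℓ + 1) - u ℓ) * g ℓ := by
    intro ℓ hℓ
    rw [Finset.mem_Icc] at hℓ
    have hstep : u (ℓ + 1)
        = u ℓ * Complex.exp (((2 * psi n₀ n₁ m₁ (ℓ + 1) : ℝ) : ℂ) * Complex.I) := by
      show Complex.exp _ = Complex.exp _ * Complex.exp _
      rw [← Complex.exp_add]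
      congr 1
      have hphi : phi n₀ n₁ m₁ (ℓ + 1) = phi n₀ n₁ m₁ ℓ + 2 * psi n₀ n₁ m₁ (ℓ + 1) := by
        rw [phi, phi, Finset.sum_range_succ]
      rw [hphi]
      push_cast
      ring
    have hne : Complex.exp (((2 * psi n₀ n₁ m₁ (ℓ + 1) : ℝ) : ℂ) * Complex.I) - 1 ≠ 0 :=
      sub_ne_zero.mpr (exp_ne_one hn₁ hm₁ hn₀m (hk1 (ℓ + 1) (by omega)))
    rw [hstep, show u ℓ * Complex.exp (((2 * psi n₀ n₁ m₁ (ℓ + 1) : ℝ) : ℂ) * Complex.I)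
        - u ℓ = u ℓ * (Complex.exp (((2 * psi n₀ n₁ m₁ (ℓ + 1) : ℝ) : ℂ) * Complex.I) - 1)
        from by ring]
    rw [mul_assoc]
    rw [show g ℓ = (Complex.exp (((2 * psi n₀ n₁ m₁ (ℓ + 1) : ℝ) : ℂ) * Complex.I) - 1)⁻¹
      from rfl]
    rw [mul_inv_cancel₀ hne, mul_one]
  have hmono : ∀ ℓ : ℕ, ℓ₁ + 1 ≤ ℓ → ℓ ≤ b → t (ℓ - 1) ≤ t ℓ := by
    intro ℓ h1 h2
    have e1 : ℓ - 1 + 1 = ℓ := by omega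
    have hpsi : psi n₀ n₁ m₁ (ℓ + 1) ≤ psi n₀ n₁ m₁ (ℓ - 1 + 1) :=
      psi_anti hn₁ hm₁ (by omega) (by linarith [hk1 (ℓ + 1) (by omega)])
    have hlt1 : psi n₀ n₁ m₁ (ℓ - 1 + 1) < 3 * π / 4 :=
      psi_lt hn₁ hm₁ hn₀m (hk1 (ℓ - 1 + 1) (by omega))
    have hpos1 : 0 < psi n₀ n₁ m₁ (ℓ + 1) :=
      psi_pos hn₁ hm₁ (hk1 (ℓ + 1) (by omega))
    exact tan_mono (by linarith) (by linarith) (by linarith)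
  have habsdiff : ∀ ℓ : ℕ, ℓ₁ + 1 ≤ ℓ → ℓ ≤ b →
      ‖g ℓ - g (ℓ - 1)‖ = (-(t (ℓ - 1)) / 2) - (-(t ℓ) / 2) := by
    intro ℓ h1 h2
    have e1 : ℓ - 1 + 1 = ℓ := by omega
    rw [hgeq ℓ (by omega), hgeq (ℓ - 1) (by omega)]
    have hd : (((-(1 / 2) : ℝ) : ℂ) + ((-(t ℓ) / 2 : ℝ) : ℂ) * Complex.I)
        - (((-(1 / 2) : ℝ) : ℂ) + ((-(t (ℓ - 1)) / 2 : ℝ) : ℂ) * Complex.I)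
        = (((t (ℓ - 1) - t ℓ) / 2 : ℝ) : ℂ) * Complex.I := by
      push_cast
      ring
    rw [hd, norm_mul, Complex.norm_I, mul_one, Complex.norm_real, Real.norm_eq_abs,
      abs_of_nonpos (by linarith [hmono ℓ h1 h2])]
    ring
  have hsum3 : ‖∑ ℓ ∈ Icc (ℓ₁ + 1) b, u ℓ * (g ℓ - g (ℓ - 1))‖ ≤ (T + 1) / 2 := by
    calc ‖∑ ℓ ∈ Icc (ℓ₁ + 1) b, u ℓ * (g ℓ - g (ℓ - 1))‖
        ≤ ∑ ℓ ∈ Icc (ℓ₁ + 1) b, ‖u ℓ * (g ℓ - g (ℓ - 1))‖ := norm_sum_le _ _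
      _ = ∑ ℓ ∈ Icc (ℓ₁ + 1) b,
            ((fun i => -(t i) / 2) (ℓ - 1) - (fun i => -(t i) / 2) ℓ) := by
          refine Finset.sum_congr rfl fun ℓ hℓ => ?_
          rw [Finset.mem_Icc] at hℓ
          rw [norm_mul, huabs, one_mul, habsdiff ℓ hℓ.1 hℓ.2]
      _ = -(t ℓ₁) / 2 - -(t b) / 2 := telescope (fun i => -(t i) / 2) b ℓ₁ hab
      _ ≤ (T + 1) / 2 := by
          have h1 := htlow ℓ₁ (by omega)
          have h2 := hthigh b (by omega)
          linarith
  have habel : ∑ ℓ ∈ Icc ℓ₁ b, u ℓ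
      = u (b + 1) * g b - u ℓ₁ * g ℓ₁ - ∑ ℓ ∈ Icc (ℓ₁ + 1) b, u ℓ * (g ℓ - g (ℓ - 1)) := by
    rw [Finset.sum_congr rfl hrep]
    exact abel_id u g b ℓ₁ hab
  have hS' : ‖∑ ℓ ∈ Icc ℓ₁ b, u ℓ‖ ≤ (1 + T / 2) + (1 + T / 2) + (T + 1) / 2 := by
    rw [habel]
    have ha1 : ‖u (b + 1) * g b‖ ≤ 1 + T / 2 := by
      rw [norm_mul, huabs, one_mul]; exact hgabs b (by omega)
    have ha2 : ‖u ℓ₁ * g ℓ₁‖ ≤ 1 + T / 2 := by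
      rw [norm_mul, huabs, one_mul]; exact hgabs ℓ₁ (by omega)
    calc ‖u (b + 1) * g b - u ℓ₁ * g ℓ₁ - ∑ ℓ ∈ Icc (ℓ₁ + 1) b, u ℓ * (g ℓ - g (ℓ - 1))‖
        ≤ ‖u (b + 1) * g b - u ℓ₁ * g ℓ₁‖
          + ‖∑ ℓ ∈ Icc (ℓ₁ + 1) b, u ℓ * (g ℓ - g (ℓ - 1))‖ := norm_sub_le _ _
      _ ≤ (‖u (b + 1) * g b‖ + ‖u ℓ₁ * g ℓ₁‖)
          + ‖∑ ℓ ∈ Icc (ℓ₁ + 1) b, u ℓ * (g ℓ - g (ℓ - 1))‖ := by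
            have := norm_sub_le (u (b + 1) * g b) (u ℓ₁ * g ℓ₁)
            linarith
      _ ≤ (1 + T / 2) + (1 + T / 2) + (T + 1) / 2 := by linarith [hsum3]
  rw [Finset.sum_Icc_succ_top (by omega : ℓ₁ ≤ b + 1)]
  calc ‖(∑ ℓ ∈ Icc ℓ₁ b, u ℓ) + u (b + 1)‖
      ≤ ‖∑ ℓ ∈ Icc ℓ₁ b, u ℓ‖ + ‖u (b + 1)‖ := norm_add_le _ _
    _ ≤ ((1 + T / 2) + (1 + T / 2) + (T + 1) / 2) + 1 := by
        rw [huabs]; linarith [hS']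
    _ ≤ 4 + 2 * T := by linarith

end EtaAux

open EtaAux in
/-- There is an absolute constant `c > 0` such that for every positive
integer `n₀`, reals `m₁ ≥ n₁ > 0` with `m₁ ≥ n₀`, and all integers
`1 ≤ ℓ₁ ≤ ℓ₂ ≤ n₀ - 1`, one has `|Σ_{ℓ=ℓ₁}^{ℓ₂} η_ℓ| ≤ c (1 + √(n₁/(n₀ - ℓ₂)))`. -/
theorem eta_sum_bound :
    ∃ c > (0 : ℝ), ∀ n₀ : ℕ, 0 < n₀ → ∀ n₁ m₁ : ℝ,
      0 < n₁ → n₁ ≤ m₁ → (n₀ : ℝ) ≤ m₁ →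
      ∀ ℓ₁ ℓ₂ : ℕ, 1 ≤ ℓ₁ → ℓ₁ ≤ ℓ₂ → ℓ₂ ≤ n₀ - 1 →
      ‖∑ ℓ ∈ Finset.Icc ℓ₁ ℓ₂, etaProd n₀ n₁ m₁ ℓ‖
        ≤ c * (1 + Real.sqrt (n₁ / ((n₀ : ℝ) - ℓ₂))) := by
  refine ⟨4, by norm_num, ?_⟩
  intro n₀ hn₀ n₁ m₁ hn₁ hnm hn₀m ℓ₁ ℓ₂ hℓ₁ h12 h2
  have hm₁ : 0 < m₁ := hn₁.trans_le hnm
  have hn₀ℓ₂ : ℓ₂ + 1 ≤ n₀ := by omega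
  have hk₂ : (1 : ℝ) ≤ (n₀ : ℝ) - ℓ₂ := by
    have : ((ℓ₂ : ℝ) + 1) ≤ (n₀ : ℝ) := by exact_mod_cast hn₀ℓ₂
    linarith
  have hT0 : 0 ≤ Real.sqrt (n₁ / ((n₀ : ℝ) - ℓ₂)) := Real.sqrt_nonneg _
  have hsum_eq : ∑ ℓ ∈ Finset.Icc ℓ₁ ℓ₂, etaProd n₀ n₁ m₁ ℓ
      = ∑ ℓ ∈ Finset.Icc ℓ₁ ℓ₂, Complex.exp (((phi n₀ n₁ m₁ ℓ : ℝ) : ℂ) * Complex.I) := by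
    refine Finset.sum_congr rfl fun ℓ hℓ => ?_
    rw [Finset.mem_Icc] at hℓ
    refine eta_exp n₀ hn₁ hm₁ ℓ fun j hj => ?_
    have hj2 : j ≤ ℓ₂ := hj.trans hℓ.2
    have : (j : ℝ) ≤ (ℓ₂ : ℝ) := by exact_mod_cast hj2
    linarith
  rw [hsum_eq]
  rcases eq_or_lt_of_le h12 with rfl | hlt
  · rw [Finset.Icc_self, Finset.sum_singleton]
    have : ‖Complex.exp (((phi n₀ n₁ m₁ ℓ₁ : ℝ) : ℂ) * Complex.I)‖ = 1 := by
      exact Complex.norm_exp_ofReal_mul_I _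
    rw [this]
    nlinarith
  · obtain ⟨b, rfl⟩ : ∃ b, ℓ₂ = b + 1 := ⟨ℓ₂ - 1, by omega⟩
    have hab : ℓ₁ ≤ b := by omega
    have hb : (b : ℝ) + 2 ≤ (n₀ : ℝ) := by
      have : (b + 2 : ℕ) ≤ n₀ := by omega
      exact_mod_cast this
    have hkey := key hn₁ hm₁ hn₀m hab hb
    have hcast : ((b + 1 : ℕ) : ℝ) = (b : ℝ) + 1 := by push_cast; ring
    rw [hcast]
    calc ‖∑ ℓ ∈ Finset.Icc ℓ₁ (b + 1), Complex.exp (((phi n₀ n₁ m₁ ℓ : ℝ) : ℂ) * Complex.I)‖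
        ≤ 4 + 2 * Real.sqrt (n₁ / ((n₀ : ℝ) - ((b : ℝ) + 1))) := hkey
      _ ≤ 4 * (1 + Real.sqrt (n₁ / ((n₀ : ℝ) - ((b : ℝ) + 1)))) := by
          have := Real.sqrt_nonneg (n₁ / ((n₀ : ℝ) - ((b : ℝ) + 1)))
          linarith
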